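/- Fix a finite group L, an integer t ≥ 2 and θ ∈ Aut(L). Assume ℓ ∈ L^θ is θ-quasi-real of type j. If t ≥ 3, or if t = 2 and ord(ℓ) does not divide 2(j − 1), then the twisted homogeneous rack C_ℓ is of type D. -/

import Mathlib

/-- A nonempty subset of `X` closed under the operation `op` (a subrack). -/
def IsSubrackOf {X : Type*} (op : X → X → X) (Y : Set X) : Prop :=
  Y.Nonempty ∧ ∀ a ∈ Y, ∀ b ∈ Y, op a b ∈ Y

/-- The rack with underlying set `C ⊆ X` and operation `op` is of type D:
there is a decomposable subrack `R ⊔ S` of `C` and `r ∈ R`, `s ∈ S` with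
`r ▹ (s ▹ (r ▹ s)) ≠ s`. -/
def IsTypeDOn {X : Type*} (op : X → X → X) (C : Set X) : Prop :=
  ∃ R S : Set X, R ⊆ C ∧ S ⊆ C ∧ IsSubrackOf op R ∧ IsSubrackOf op S ∧
    Disjoint R S ∧
    (∀ r ∈ R, ∀ s ∈ S, op r s ∈ S) ∧ (∀ s ∈ S, ∀ r ∈ R, op s r ∈ R) ∧
    ∃ r ∈ R, ∃ s ∈ S, op r (op s (op r s)) ≠ s

/-- The automorphism `u` of `L^t`: `u(ℓ₁, …, ℓ_t) = (θ(ℓ_t), ℓ₁, …, ℓ_{t-1})`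
(indices `0, …, t-1`, so coordinate `0` is `ℓ₁` and coordinate `t-1` is `ℓ_t`). -/
def thrU {L : Type*} [Group L] (θ : L ≃* L) (t : ℕ) (x : Fin t → L) : Fin t → L :=
  fun i => if (i : ℕ) = 0 then θ (x ⟨t - 1, by have := i.2; omega⟩)
    else x ⟨(i : ℕ) - 1, by have := i.2; omega⟩

/-- The rack operation `y ▹ z = y · u(z · y⁻¹)` on `L^t`. -/
def thrOp {L : Type*} [Group L] (θ : L ≃* L) (t : ℕ) (y z : Fin t → L) : Fin t → L :=
  y * thrU θ t (z * y⁻¹)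

/-- The element `(e, …, e, ℓ)` of `L^t`. -/
def thrBase {L : Type*} [Group L] (t : ℕ) (ℓ : L) : Fin t → L :=
  fun i => if (i : ℕ) = t - 1 then ℓ else 1

/-- The twisted conjugacy class (twisted homogeneous rack) of `x ∈ L^t`
with respect to `u`, i.e. the orbit of `x` under `g ⇀ x = g · x · u(g)⁻¹`. -/
def thrClassOf {L : Type*} [Group L] (θ : L ≃* L) (t : ℕ) (x : Fin t → L) :
    Set (Fin t → L) :=
  {y | ∃ g : Fin t → L, g * x * (thrU θ t g)⁻¹ = y}

/-- The twisted homogeneous rack `C_ℓ = C_{(e,…,e,ℓ)}` of class `(L, t, θ)`. -/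
def thrClass {L : Type*} [Group L] (θ : L ≃* L) (t : ℕ) (ℓ : L) : Set (Fin t → L) :=
  thrClassOf θ t (thrBase t ℓ)

/-- The twisted conjugacy class `O^{L,θ}_ℓ = {a·ℓ·θ(a)⁻¹ : a ∈ L}`. -/
def twConjClass {L : Type*} [Group L] (θ : L ≃* L) (ℓ : L) : Set L :=
  {k | ∃ a : L, a * ℓ * (θ a)⁻¹ = k}

/-- The "previous index" map `i ↦ i - 1 mod t`. -/
def thrPrev {t : ℕ} (i : Fin t) : Fin t :=
  if (i : ℕ) = 0 then ⟨t - 1, by have := i.2; omega⟩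
    else ⟨(i : ℕ) - 1, by have := i.2; omega⟩

lemma thrPrev_bijective {t : ℕ} : Function.Bijective (thrPrev (t := t)) := by
  rw [Finite.injective_iff_bijective.symm]
  intro i k hik
  have h := congrArg Fin.val hik
  simp only [thrPrev, apply_ite Fin.val] at h
  have hi := i.2; have hk := k.2
  apply Fin.ext
  split_ifs at h <;> omega

lemma thrOp_pow {L : Type*} [Group L] (θ : L ≃* L) {t : ℕ} {ℓ : L} (hθℓ : θ ℓ = ℓ)
    (b c : Fin t → ℤ) :
    thrOp θ t (fun i => ℓ ^ b i) (fun i => ℓ ^ c i)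
      = fun i => ℓ ^ (b i + (c (thrPrev i) - b (thrPrev i))) := by
  have hz : ∀ k : ℤ, θ (ℓ ^ k) = ℓ ^ k := by intro k; rw [map_zpow, hθℓ]
  funext i
  simp only [thrOp, thrU, thrPrev, Pi.mul_apply, Pi.inv_apply]
  split_ifs with h
  · rw [← zpow_neg, ← zpow_add, hz, ← zpow_add, sub_eq_add_neg]
  · rw [← zpow_neg, ← zpow_add, ← zpow_add, sub_eq_add_neg]

lemma pow_mem_thrClass {L : Type*} [Group L] (θ : L ≃* L) {t : ℕ} (ht : 2 ≤ t) {ℓ : L}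
    (a : Fin t → ℤ) (w : L) (hw : w * ℓ * (θ w)⁻¹ = ℓ ^ (∑ i, a i)) :
    (fun i => ℓ ^ a i) ∈ thrClass θ t ℓ := by
  classical
  set a' : ℕ → ℤ := fun m => if h : m < t then a ⟨m, h⟩ else 0 with ha'
  set T : ℕ → ℤ := fun m => ∑ k ∈ Finset.range (t - 1 - m), a' (t - 1 - k) with hT
  have ha'v : ∀ i : Fin t, a' i.val = a i := by
    intro i; simp [ha', i.2]
  have hsum : ∑ i, a i = a' 0 + T 0 := by
    have h1 : ∑ i, a i = ∑ k ∈ Finset.range t, a' k := by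
      rw [← Fin.sum_univ_eq_sum_range a' t]
      exact Finset.sum_congr rfl (fun i _ => (ha'v i).symm)
    have h2 : T 0 = ∑ k ∈ Finset.range (t - 1), a' (k + 1) := by
      rw [hT]
      rw [← Finset.sum_range_reflect (fun k => a' (k + 1)) (t - 1)]
      apply Finset.sum_congr (by norm_num)
      intro k hk
      have := Finset.mem_range.mp hk
      congr 1
      omega
    rw [h1, h2, show t = (t - 1) + 1 by omega, Finset.sum_range_succ']
    ring_nf
    rw [show 1 + (t - 1) - 1 = t - 1 by omega]
    ring
  refine ⟨fun i => if (i : ℕ) = t - 1 then w else ℓ ^ (-(T i)) * w * ℓ, ?_⟩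
  funext i
  have hi2 := i.2
  simp only [Pi.mul_apply, Pi.inv_apply, thrBase, thrU]
  by_cases h0 : (i : ℕ) = 0
  · have hne : ¬ (i : ℕ) = t - 1 := by omega
    rw [if_neg hne, if_neg hne, if_pos h0, mul_one]
    simp only [if_true]
    rw [mul_assoc (ℓ ^ (-(T ↑i))) w ℓ, mul_assoc (ℓ ^ (-(T ↑i))) (w * ℓ) (θ w)⁻¹, hw,
      ← zpow_add]
    congr 1
    have : a' 0 = a i := by rw [← ha'v i, h0]
    rw [h0]
    omega
  · by_cases h1 : (i : ℕ) = t - 1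
    · rw [if_pos h1, if_pos h1, if_neg h0,
        if_neg (show ¬ ((⟨(i : ℕ) - 1, by omega⟩ : Fin t) : ℕ) = t - 1 by
          simp only [Fin.val_mk]; omega)]
      have hTv : T ((i : ℕ) - 1) = a i := by
        rw [hT]
        simp only
        rw [show t - 1 - ((i : ℕ) - 1) = 1 by omega, Finset.sum_range_one,
          show t - 1 - 0 = (i : ℕ) by omega]
        exact ha'v i
      rw [← hTv]
      simp [mul_inv_rev, mul_assoc, zpow_neg]
    · rw [if_neg h1, if_neg h1, if_neg h0, mul_one,
        if_neg (show ¬ ((⟨(i : ℕ) - 1, by omega⟩ : Fin t) : ℕ) = t - 1 by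
          simp only [Fin.val_mk]; omega)]
      have hTv : T ((i : ℕ) - 1) = a i + T (i : ℕ) := by
        rw [hT]
        simp only
        rw [show t - 1 - ((i : ℕ) - 1) = (t - 1 - (i : ℕ)) + 1 by omega,
          Finset.sum_range_succ, show t - 1 - (t - 1 - (i : ℕ)) = (i : ℕ) by omega,
          ha'v i]
        ring
      rw [hTv]
      group

set_option maxHeartbeats 1600000 in
/-- Lemma 3.11: if `ℓ ∈ L^θ` is `θ`-quasi-real of type `j` (i.e. `ℓ^j ≠ ℓ` and
`ℓ^j ∈ O^{L,θ}_ℓ`), and `t ≥ 3`, or `t = 2` and `ord(ℓ) ∤ 2(j - 1)`, then `C_ℓ`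
is of type D. -/
theorem thrClass_isTypeD_of_quasiReal {L : Type*} [Group L] [Fintype L]
    (θ : L ≃* L) (t : ℕ) (ht : 2 ≤ t) (ℓ : L) (hθℓ : θ ℓ = ℓ) (j : ℕ)
    (hqr1 : ℓ ^ j ≠ ℓ) (hqr2 : ℓ ^ j ∈ twConjClass θ ℓ)
    (h : 3 ≤ t ∨ (t = 2 ∧ ¬ ((orderOf ℓ : ℤ) ∣ 2 * ((j : ℤ) - 1)))) :
    IsTypeDOn (thrOp θ t) (thrClass θ t ℓ) := by
  classical
  -- key equivalence for powers of ℓ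
  have key : ∀ m k : ℤ, ℓ ^ m = ℓ ^ k ↔ (orderOf ℓ : ℤ) ∣ k - m := by
    intro m k
    rw [zpow_eq_zpow_iff_modEq]
    exact Int.modEq_iff_dvd
  have hndvd : ¬ ((orderOf ℓ : ℤ) ∣ (j : ℤ) - 1) := by
    intro hd
    apply hqr1
    have h1 : ℓ ^ ((j : ℤ)) = ℓ ^ (1 : ℤ) := ((key 1 (j : ℤ)).mpr (by simpa using hd)).symm
    rw [← zpow_natCast ℓ j, h1, zpow_one]
  -- sum of exponents determines membership behaviour
  have hpwsum : ∀ a a' : Fin t → ℤ, (fun i => ℓ ^ a i) = (fun i => ℓ ^ a' i) →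
      ℓ ^ (∑ i, a i) = ℓ ^ (∑ i, a' i) := by
    intro a a' hpa
    rw [key]
    have hdvd : ∀ i, (orderOf ℓ : ℤ) ∣ a' i - a i :=
      fun i => (key _ _).mp (congrFun hpa i)
    have : (orderOf ℓ : ℤ) ∣ ∑ i, (a' i - a i) := Finset.dvd_sum (fun i _ => hdvd i)
    simpa [Finset.sum_sub_distrib] using this
  have hsum_op : ∀ b c : Fin t → ℤ,
      (∑ i, (b i + (c (thrPrev i) - b (thrPrev i)))) = ∑ i, c i := by
    intro b c
    rw [Finset.sum_add_distrib, Finset.sum_sub_distrib,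
      thrPrev_bijective.sum_comp c, thrPrev_bijective.sum_comp b]
    ring
  -- the two subracks
  set R : Set (Fin t → L) :=
    {x | ∃ a : Fin t → ℤ, x = (fun i => ℓ ^ a i) ∧ ℓ ^ (∑ i, a i) = ℓ ^ (1 : ℤ)} with hR
  set S : Set (Fin t → L) :=
    {x | ∃ a : Fin t → ℤ, x = (fun i => ℓ ^ a i) ∧ ℓ ^ (∑ i, a i) = ℓ ^ ((j : ℤ))} with hS
  -- closure of the operation
  have hclos : ∀ (m : ℤ) (y z : Fin t → L), (∃ b : Fin t → ℤ, y = (fun i => ℓ ^ b i)) →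
      (∃ c : Fin t → ℤ, z = (fun i => ℓ ^ c i) ∧ ℓ ^ (∑ i, c i) = ℓ ^ m) →
      ∃ c : Fin t → ℤ, thrOp θ t y z = (fun i => ℓ ^ c i) ∧ ℓ ^ (∑ i, c i) = ℓ ^ m := by
    rintro m y z ⟨b, rfl⟩ ⟨c, rfl, hc⟩
    exact ⟨fun i => b i + (c (thrPrev i) - b (thrPrev i)), thrOp_pow θ hθℓ b c,
      by rw [hsum_op b c]; exact hc⟩
  -- indicator sums
  have hsum_ind : ∀ (m : ℕ), m < t → ∀ v : ℤ,
      (∑ i : Fin t, (if (i : ℕ) = m then v else 0)) = v := by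
    intro m hm v
    rw [Finset.sum_eq_single (⟨m, hm⟩ : Fin t)]
    · simp
    · intro b _ hb
      rw [if_neg (fun hc => hb (Fin.ext hc))]
    · intro hb; exact absurd (Finset.mem_univ _) hb
  -- the exponent vectors of r and s
  set br : Fin t → ℤ := fun i => if (i : ℕ) = t - 1 then 1 else 0 with hbr
  set cs : Fin t → ℤ :=
    fun i => (if (i : ℕ) = t - 1 then 1 else 0) + (if (i : ℕ) = 0 then (j : ℤ) - 1 else 0)
    with hcs
  have hbrsum : ℓ ^ (∑ i, br i) = ℓ ^ (1 : ℤ) := by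
    simp only [hbr]
    rw [hsum_ind (t - 1) (by omega) 1]
  have hcssum : ℓ ^ (∑ i, cs i) = ℓ ^ ((j : ℤ)) := by
    simp only [hcs]
    rw [Finset.sum_add_distrib, hsum_ind (t - 1) (by omega) 1,
      hsum_ind 0 (by omega) ((j : ℤ) - 1)]
    congr 1
    ring
  have hrR : (fun i => ℓ ^ br i) ∈ R := ⟨br, rfl, hbrsum⟩
  have hsS : (fun i => ℓ ^ cs i) ∈ S := ⟨cs, rfl, hcssum⟩
  refine ⟨R, S, ?_, ?_, ?_, ?_, ?_, ?_, ?_, ?_⟩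
  · -- R ⊆ C_ℓ
    rintro x ⟨a, rfl, ha⟩
    refine pow_mem_thrClass θ ht a 1 ?_
    simp [ha]
  · -- S ⊆ C_ℓ
    rintro x ⟨a, rfl, ha⟩
    obtain ⟨w, hw⟩ := hqr2
    refine pow_mem_thrClass θ ht a w ?_
    rw [hw, ← zpow_natCast ℓ j]
    exact ha.symm
  · -- R subrack
    exact ⟨⟨_, hrR⟩, fun y hy z hz => hclos 1 y z (hy.imp fun b hb => hb.1) hz⟩
  · -- S subrack
    exact ⟨⟨_, hsS⟩, fun y hy z hz => hclos (j : ℤ) y z (hy.imp fun b hb => hb.1) hz⟩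
  · -- disjoint
    rw [Set.disjoint_left]
    rintro x ⟨a, rfl, ha⟩ ⟨a', ha', ha''⟩
    apply hqr1
    rw [← zpow_natCast ℓ j, ← ha'', ← hpwsum a a' ha', ha, zpow_one]
  · exact fun r hr z hz => hclos (j : ℤ) r z (hr.imp fun b hb => hb.1) hz
  · exact fun s hs z hz => hclos 1 s z (hs.imp fun b hb => hb.1) hz
  · -- the inequality
    refine ⟨_, hrR, _, hsS, ?_⟩
    intro heq
    set A : Fin t → ℤ := fun i => br i + (cs (thrPrev i) - br (thrPrev i)) with hA
    set B : Fin t → ℤ := fun i => cs i + (A (thrPrev i) - cs (thrPrev i)) with hB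
    set E : Fin t → ℤ := fun i => br i + (B (thrPrev i) - br (thrPrev i)) with hE
    have e1 : thrOp θ t (fun i => ℓ ^ br i) (fun i => ℓ ^ cs i) = fun i => ℓ ^ A i :=
      thrOp_pow θ hθℓ br cs
    have e2 : thrOp θ t (fun i => ℓ ^ cs i) (fun i => ℓ ^ A i) = fun i => ℓ ^ B i :=
      thrOp_pow θ hθℓ cs A
    have e3 : thrOp θ t (fun i => ℓ ^ br i) (fun i => ℓ ^ B i) = fun i => ℓ ^ E i :=
      thrOp_pow θ hθℓ br B
    rw [e1, e2, e3] at heq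
    have hpt : ∀ i : Fin t, ((thrPrev i : Fin t) : ℕ) =
        if (i : ℕ) = 0 then t - 1 else (i : ℕ) - 1 := by
      intro i
      simp only [thrPrev, apply_ite Fin.val]
    have hd : (orderOf ℓ : ℤ) ∣ cs (⟨1, by omega⟩ : Fin t) - E (⟨1, by omega⟩ : Fin t) :=
      (key _ _).mp (congrFun heq ⟨1, by omega⟩)
    -- evaluate the exponents
    have hval : cs (⟨1, by omega⟩ : Fin t) - E (⟨1, by omega⟩ : Fin t) =
        (if 1 = t - 1 then (2 : ℤ) else 1) * (1 - (j : ℤ)) := by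
      rw [hE, hB, hA]
      simp only [hpt, hcs, hbr, Fin.val_mk]
      split_ifs <;> first | contradiction | omega
    rw [hval] at hd
    rcases h with h3 | ⟨ht2, h2⟩
    · rw [if_neg (by omega : ¬ (1 = t - 1)), one_mul] at hd
      apply hndvd
      have : (j : ℤ) - 1 = -(1 - (j : ℤ)) := by ring
      rw [this]
      exact dvd_neg.mpr hd
    · subst ht2
      rw [if_pos rfl] at hd
      apply h2
      have : (2 : ℤ) * ((j : ℤ) - 1) = -(2 * (1 - (j : ℤ))) := by ring
      rw [this]
      exact dvd_neg.mpr hd
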